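/- Let G be a finite group in which every non-identity element has prime order, and suppose G is solvable and not a p-group of exponent p for any prime p. Then G is a Frobenius group whose order is p^a·q for two distinct primes p, q. -/

import Mathlib

open Finset Subgroup Function
open scoped IsMulCommutative

set_option linter.unusedSectionVars false

namespace FrobAux

variable {G : Type*} [Group G] [Finite G]


omit [Finite G] in
/-- If `b ≠ 1` commutes with an element of prime order `s`, and all non-identity
elements have prime order, then `b` has order `s`. -/
lemma order_eq_of_commute (hprime : ∀ g : G, g ≠ 1 → (orderOf g).Prime)
    {s : ℕ} {a₀ b : G} (hs : s.Prime) (ha : orderOf a₀ = s) (hb : b ≠ 1)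
    (hc : Commute b a₀) : orderOf b = s := by
  by_contra hne
  have hbp : (orderOf b).Prime := hprime b hb
  have hba : b * a₀ ≠ 1 := by
    intro h
    have hb' : b = a₀⁻¹ := eq_inv_of_mul_eq_one_left h
    rw [hb', orderOf_inv, ha] at hne
    exact hne rfl
  have hco : Nat.Coprime (orderOf b) (orderOf a₀) := by
    rw [ha]
    exact (Nat.coprime_primes hbp hs).mpr (by rw [← ha] at hne ⊢; exact hne)
  have hmul := hc.orderOf_mul_eq_mul_orderOf_of_coprime hco
  have hp2 := hprime _ hba
  rw [hmul] at hp2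
  rcases Nat.prime_mul_iff.mp hp2 with ⟨_, h1⟩ | ⟨_, h1⟩
  · rw [ha] at h1; exact hs.ne_one h1
  · exact hbp.ne_one h1

section Conj

variable (A : Subgroup G) [A.Normal]

/-- Conjugation action on a normal subgroup, as a monoid hom. -/
def cj (g : G) : A →* A := (MulAut.conjNormal g).toMonoidHom

lemma cj_coe (g : G) (a : A) : ((cj A g a : A) : G) = g * ↑a * g⁻¹ := by
  simp [cj]

lemma cj_mul (g₁ g₂ : G) (a : A) : cj A (g₁ * g₂) a = cj A g₁ (cj A g₂ a) := by
  simp [cj, map_mul]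

lemma cj_one (a : A) : cj A 1 a = a := by
  ext; simp [cj_coe]

variable [IsMulCommutative A]

/-- The "norm" of `a` under conjugation by powers of `g`. -/
noncomputable def Nrm (g : G) (a : A) : A := ∏ i ∈ Finset.range (orderOf g), cj A (g ^ i) a

lemma Nrm_mul (g : G) (a b : A) : Nrm A g (a * b) = Nrm A g a * Nrm A g b := by
  simp [Nrm, map_mul, Finset.prod_mul_distrib]

lemma Nrm_inv (g : G) (a : A) : Nrm A g a⁻¹ = (Nrm A g a)⁻¹ := by
  simp [Nrm, map_inv, Finset.prod_inv_distrib]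

lemma Nrm_triv (g : G) : Nrm A g 1 = 1 := by simp [Nrm]

lemma prod_shift (g : G) (a : A) :
    ∏ i ∈ Finset.range (orderOf g), cj A (g ^ (i + 1)) a = Nrm A g a := by
  have h1 : ∏ i ∈ Finset.range (orderOf g + 1), cj A (g ^ i) a
      = (∏ i ∈ Finset.range (orderOf g), cj A (g ^ (i + 1)) a) * cj A (g ^ 0) a :=
    Finset.prod_range_succ' _ _
  have h2 : ∏ i ∈ Finset.range (orderOf g + 1), cj A (g ^ i) a
      = (∏ i ∈ Finset.range (orderOf g), cj A (g ^ i) a) * cj A (g ^ orderOf g) a :=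
    Finset.prod_range_succ _ _
  rw [pow_orderOf_eq_one, cj_one] at h2
  rw [pow_zero, cj_one] at h1
  have := h1.symm.trans h2
  exact mul_right_cancel this

lemma Nrm_conj (g : G) (a : A) : Nrm A g (cj A g a) = Nrm A g a := by
  have : ∀ i : ℕ, cj A (g ^ i) (cj A g a) = cj A (g ^ (i + 1)) a := by
    intro i
    rw [← cj_mul, ← pow_succ]
  calc Nrm A g (cj A g a) = ∏ i ∈ Finset.range (orderOf g), cj A (g ^ (i+1)) a := by
        unfold Nrm; exact Finset.prod_congr rfl fun i _ => this i
    _ = Nrm A g a := prod_shift A g a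

lemma pow_mul_coe (g : G) (a : A) (m : ℕ) :
    (g * (a : G)) ^ m = g ^ m * ((∏ i ∈ Finset.range m, cj A (g⁻¹ ^ i) a : A) : G) := by
  induction m with
  | zero => simp
  | succ m ih =>
    have hQ' : (∏ i ∈ Finset.range (m + 1), cj A (g⁻¹ ^ i) a)
        = cj A g⁻¹ (∏ i ∈ Finset.range m, cj A (g⁻¹ ^ i) a) * a := by
      rw [Finset.prod_range_succ' (fun i => cj A (g⁻¹ ^ i) a), map_prod]
      congr 1
      · exact Finset.prod_congr rfl fun i _ => by rw [← cj_mul, ← pow_succ']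
      · rw [pow_zero, cj_one]
    rw [pow_succ, ih, hQ', Subgroup.coe_mul, cj_coe, inv_inv, pow_succ]
    simp [mul_assoc]


lemma inv_prod_eq_Nrm (g : G) (a : A) :
    ∏ i ∈ Finset.range (orderOf g), cj A (g⁻¹ ^ i) a = Nrm A g a := by
  set n := orderOf g with hn
  have key : ∀ i ∈ Finset.range n, cj A (g⁻¹ ^ i) a = (fun j => cj A (g ^ (j+1)) a) (n - 1 - i) := by
    intro i hi
    simp only [Finset.mem_range] at hi
    have h1 : n - 1 - i + 1 = n - i := by omega
    have h2 : g⁻¹ ^ i = g ^ (n - i) := by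
      rw [inv_pow, inv_eq_iff_mul_eq_one, ← pow_add]
      have h3 : i + (n - i) = n := by omega
      rw [h3, hn]
      exact pow_orderOf_eq_one g
    simp only [h1, h2]
  rw [Finset.prod_congr rfl key, Finset.prod_range_reflect (fun j => cj A (g ^ (j+1)) a) n]
  exact prod_shift A g a

lemma pow_orderOf_eq_Nrm (g : G) (a : A) :
    (g * (a : G)) ^ orderOf g = ((Nrm A g a : A) : G) := by
  rw [pow_mul_coe A g a (orderOf g), inv_prod_eq_Nrm A g a, pow_orderOf_eq_one, one_mul]

/-- Master norm-vanishing lemma. -/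
lemma Nrm_eq_one (hprime : ∀ g : G, g ≠ 1 → (orderOf g).Prime)
    {s : ℕ} (hs : s.Prime) (horder : ∀ a : A, a ≠ 1 → orderOf (a : G) = s) :
    ∀ g : G, g ≠ 1 → ∀ a : A, Nrm A g a = 1 := by
  have hApow : ∀ b : A, (b : G) ^ s = 1 := by
    intro b
    by_cases hb : b = 1
    · rw [hb]; simp
    · rw [← horder b hb]; exact pow_orderOf_eq_one _
  intro g hg a
  have hgp := hprime g hg
  by_cases hns : orderOf g = s
  · -- `g` has order `s`
    have hkey : (g * (a : G)) ^ s = ((Nrm A g a : A) : G) := by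
      rw [← hns]; exact pow_orderOf_eq_Nrm A g a
    by_cases hga : g * (a : G) = 1
    · have h1 : ((Nrm A g a : A) : G) = 1 := by rw [← hkey, hga, one_pow]
      exact_mod_cast h1
    · have h2 : (g * (a : G)) ^ (s * s) = 1 := by
        rw [pow_mul, hkey]; exact hApow _
      have hdvd : orderOf (g * (a : G)) ∣ s * s := orderOf_dvd_of_pow_eq_one h2
      have hpo := hprime _ hga
      have : orderOf (g * (a : G)) = s := by
        have hd : orderOf (g * (a : G)) ∣ s ^ 2 := by rwa [sq]
        exact (Nat.prime_dvd_prime_iff_eq hpo hs).mp (hpo.dvd_of_dvd_pow hd)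
      have h3 : (g * (a : G)) ^ s = 1 := by rw [← this]; exact pow_orderOf_eq_one _
      have h4 : ((Nrm A g a : A) : G) = 1 := by rw [← hkey, h3]
      exact_mod_cast h4
  · -- fixed-point-free case
    have hfpf : ∀ b : A, cj A g b = b → b = 1 := by
      intro b hb
      by_contra hb1
      have hcoe : g * (b : G) * g⁻¹ = (b : G) := by
        have := congrArg (Subtype.val) hb
        rwa [cj_coe] at this
      have hcomm : Commute g (b : G) := by
        rw [Commute, SemiconjBy]
        rw [mul_inv_eq_iff_eq_mul] at hcoe
        exact hcoe
      have hob : orderOf (b : G) = s := horder b hb1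
      have hgb1 : g * (b : G) ≠ 1 := by
        intro h
        have : g = ((b : G))⁻¹ := eq_inv_of_mul_eq_one_left h
        rw [this, orderOf_inv, hob] at hns
        exact hns rfl
      have hco : Nat.Coprime (orderOf g) (orderOf (b : G)) := by
        rw [hob]; exact (Nat.coprime_primes hgp hs).mpr hns
      have hmul := hcomm.orderOf_mul_eq_mul_orderOf_of_coprime hco
      have hp2 := hprime _ hgb1
      rw [hmul, hob] at hp2
      rcases Nat.prime_mul_iff.mp hp2 with ⟨_, h1⟩ | ⟨_, h1⟩
      · exact hs.ne_one h1
      · exact hg (orderOf_eq_one_iff.mp h1)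
    set φ : A → A := fun b => cj A g b * b⁻¹ with hφ
    have hinj : Function.Injective φ := by
      intro b c h
      simp only [hφ] at h
      have hcross : cj A g b * c = cj A g c * b := by
        rw [← div_eq_mul_inv, ← div_eq_mul_inv, div_eq_div_iff_mul_eq_mul] at h
        exact h
      have h2 : cj A g (b * c⁻¹) = b * c⁻¹ := by
        rw [map_mul, map_inv, ← div_eq_mul_inv, ← div_eq_mul_inv,
          div_eq_div_iff_mul_eq_mul, hcross, mul_comm]
      have := hfpf _ h2
      rwa [mul_inv_eq_one] at this
    have hsurj := Finite.injective_iff_surjective.mp hinj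
    obtain ⟨b, hb⟩ := hsurj a
    calc Nrm A g a = Nrm A g (cj A g b * b⁻¹) := by rw [← hb]
      _ = Nrm A g (cj A g b) * (Nrm A g b)⁻¹ := by rw [Nrm_mul, Nrm_inv]
      _ = Nrm A g b * (Nrm A g b)⁻¹ := by rw [Nrm_conj]
      _ = 1 := mul_inv_cancel _


section Unified

lemma conj_mem_zpowers {x y : G} (h : y * x * y⁻¹ ∈ zpowers x) :
    ∀ v ∈ zpowers x, y * v * y⁻¹ ∈ zpowers x := by
  rintro v ⟨k, rfl⟩
  have : y * x ^ k * y⁻¹ = (y * x * y⁻¹) ^ k := by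
    rw [conj_zpow]
  rw [this]
  exact zpow_mem h k

lemma conj_pow_mem_zpowers {x y : G} (h : y * x * y⁻¹ ∈ zpowers x) :
    ∀ (m : ℕ), ∀ v ∈ zpowers x, y ^ m * v * (y ^ m)⁻¹ ∈ zpowers x := by
  intro m
  induction m with
  | zero => intro v hv; simpa using hv
  | succ m ih =>
    intro v hv
    have h1 : y ^ (m+1) * v * (y ^ (m+1))⁻¹ = y * (y ^ m * v * (y ^ m)⁻¹) * y⁻¹ := by
      rw [pow_succ']
      group
    rw [h1]
    exact conj_mem_zpowers h _ (ih v hv)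

lemma U_mem {x y : G} (h : y * x * y⁻¹ ∈ zpowers x) :
    ∀ (m : ℕ), ∀ v ∈ zpowers x, (v * y) ^ m * (y ^ m)⁻¹ ∈ zpowers x := by
  intro m
  induction m with
  | zero => intro v hv; simpa using one_mem (zpowers x)
  | succ m ih =>
    intro v hv
    have h1 : (v * y) ^ (m+1) * (y ^ (m+1))⁻¹
        = ((v * y) ^ m * (y ^ m)⁻¹) * (y ^ m * v * (y ^ m)⁻¹) := by
      rw [pow_succ, pow_succ]
      group
    rw [h1]
    exact mul_mem (ih v hv) (conj_pow_mem_zpowers h m v hv)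

/-- The central contradiction engine. -/
lemma unified (hprime : ∀ g : G, g ≠ 1 → (orderOf g).Prime)
    {s : ℕ} (hs : s.Prime) (a₀ : A) (ha₀ : orderOf (a₀ : G) = s)
    (hN : ∀ g : G, g ≠ 1 → ∀ a : A, Nrm A g a = 1)
    {x y : G} (hx : (orderOf x).Prime) (hxs : orderOf x ≠ s)
    (hy : y ∉ zpowers x) (hyp : (orderOf y).Prime)
    (hnorm : y * x * y⁻¹ ∈ zpowers x)
    (hw : ∀ v ∈ zpowers x, orderOf (v * y) = orderOf y) : False := by
  classical
  set X : Subgroup G := zpowers x with hX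
  haveI : Fintype X := Fintype.ofFinite _
  set t := orderOf x with ht
  set w := orderOf y with hwdef
  have hy1 : y ≠ 1 := fun h => hy (h ▸ one_mem _)
  have hw2 : 1 < w := hyp.one_lt
  have hvy1 : ∀ v : X, (v : G) * y ≠ 1 := by
    intro v hv
    have h2 : ((v : G))⁻¹ = y := by rw [eq_inv_of_mul_eq_one_left hv, inv_inv]
    exact hy (h2 ▸ inv_mem v.2)
  have hcardX : Fintype.card X = t := by
    rw [← Nat.card_eq_fintype_card, hX, Nat.card_zpowers]
  -- first identity
  have hP1 : ∏ v : X, ∏ m ∈ Finset.range w, cj A (((v : G) * y) ^ m) a₀ = 1 := by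
    apply Finset.prod_eq_one
    intro v _
    have hov : orderOf ((v : G) * y) = w := hw v v.2
    have := hN ((v : G) * y) (hvy1 v) a₀
    rwa [Nrm, hov] at this
  -- second identity
  have hP2 : ∏ v : X, ∏ m ∈ Finset.range w, cj A ((v : G) * y ^ m) a₀ = 1 := by
    apply Finset.prod_eq_one
    intro v _
    have h1 : ∀ m, cj A ((v : G) * y ^ m) a₀ = cj A (v : G) (cj A (y ^ m) a₀) := by
      intro m; rw [← cj_mul]
    calc ∏ m ∈ Finset.range w, cj A ((v : G) * y ^ m) a₀
        = cj A (v : G) (∏ m ∈ Finset.range w, cj A (y ^ m) a₀) := by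
          rw [map_prod]; exact Finset.prod_congr rfl fun m _ => h1 m
      _ = cj A (v : G) (Nrm A y a₀) := by rw [Nrm, hwdef]
      _ = 1 := by rw [hN y hy1 a₀, map_one]
  -- swap products
  rw [Finset.prod_comm] at hP1 hP2
  -- peel off m = 0
  obtain ⟨w', hw'⟩ : ∃ w', w = w' + 1 := ⟨w - 1, by omega⟩
  rw [hw', Finset.prod_range_succ'] at hP1 hP2
  -- m = 0 terms
  have hm0₁ : (∏ v : X, cj A (((v : G) * y) ^ 0) a₀) = a₀ ^ t := by
    simp only [pow_zero, cj_one]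
    rw [Finset.prod_const, Finset.card_univ, hcardX]
  have hm0₂ : (∏ v : X, cj A ((v : G) * y ^ 0) a₀) = 1 := by
    have : ∀ v : X, cj A ((v : G) * y ^ 0) a₀ = cj A (v : G) a₀ := by
      intro v; rw [pow_zero, mul_one]
    rw [Finset.prod_congr rfl fun v _ => this v]
    -- this is Nrm x a₀ via the equivalence Fin t ≃ X
    have heq : ∏ v : X, cj A (v : G) a₀ = ∏ i ∈ Finset.range t, cj A (x ^ i) a₀ := by
      refine (Finset.prod_bij (fun (i : ℕ) (_ : i ∈ Finset.range t) =>
          (⟨x ^ i, ⟨(i : ℤ), zpow_natCast x i⟩⟩ : X)) ?_ ?_ ?_ ?_).symm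
      · intro i _; exact Finset.mem_univ _
      · intro i hi j hj hij
        simp only [Finset.mem_range] at hi hj
        exact pow_injOn_Iio_orderOf (by rw [Set.mem_Iio, ← ht]; exact hi)
          (by rw [Set.mem_Iio, ← ht]; exact hj) (Subtype.ext_iff.mp hij)
      · intro v _
        obtain ⟨kk, hkk⟩ := v.2
        have htpos : (0:ℤ) < (t:ℤ) := by exact_mod_cast hx.pos
        have h2 : 0 ≤ kk % (t:ℤ) := Int.emod_nonneg kk (by omega)
        refine ⟨(kk % (t:ℤ)).toNat, Finset.mem_range.mpr ?_, ?_⟩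
        · have h1 : kk % (t:ℤ) < t := Int.emod_lt_of_pos kk htpos
          omega
        · apply Subtype.ext
          show x ^ ((kk % (t:ℤ)).toNat) = (v : G)
          rw [← zpow_natCast, Int.toNat_of_nonneg h2, ht, zpow_mod_orderOf]
          exact hkk
      · intro i _; rfl
    rw [heq, ht]
    exact hN x (fun h => hx.ne_one (by rw [ht, h, orderOf_one])) a₀
  -- middle terms agree
  have hmid : ∀ m ∈ Finset.range w',
      (∏ v : X, cj A (((v : G) * y) ^ (m+1)) a₀) = ∏ v : X, cj A ((v : G) * y ^ (m+1)) a₀ := by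
    intro m hm
    simp only [Finset.mem_range] at hm
    have hmlt : m + 1 < w := by omega
    have hmpos : 0 < m + 1 := Nat.succ_pos m
    set k := m + 1
    -- the bijection
    have hUmem : ∀ v : X, ((v : G) * y) ^ k * (y ^ k)⁻¹ ∈ X := fun v => U_mem hnorm k v v.2
    set e : X → X := fun v => ⟨((v : G) * y) ^ k * (y ^ k)⁻¹, hUmem v⟩ with he
    have hco : Nat.Coprime k w := by
      rw [Nat.coprime_comm]
      exact (Nat.Prime.coprime_iff_not_dvd hyp).mpr (fun hdvd => by
        have := Nat.le_of_dvd hmpos hdvd; omega)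
    have hinj : Function.Injective e := by
      intro v v' hvv
      have h1 : ((v : G) * y) ^ k = ((v' : G) * y) ^ k := by
        have := congrArg Subtype.val hvv
        simp only [he] at this
        exact mul_right_cancel this
      obtain ⟨c, -, hc⟩ := Nat.exists_mul_mod_eq_one_of_coprime hco hw2
      have hov : orderOf ((v : G) * y) = w := hw v v.2
      have hov' : orderOf ((v' : G) * y) = w := hw v' v'.2
      have h2 : (v : G) * y = (v' : G) * y := by
        calc (v : G) * y = ((v : G) * y) ^ (k * c % w) := by rw [hc, pow_one]
          _ = ((v : G) * y) ^ (k * c) := by rw [← hov]; exact pow_mod_orderOf _ _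
          _ = (((v : G) * y) ^ k) ^ c := by rw [pow_mul]
          _ = (((v' : G) * y) ^ k) ^ c := by rw [h1]
          _ = ((v' : G) * y) ^ (k * c) := by rw [pow_mul]
          _ = ((v' : G) * y) ^ (k * c % w) := by rw [← hov']; exact (pow_mod_orderOf _ _).symm
          _ = (v' : G) * y := by rw [hc, pow_one]
      exact Subtype.ext (mul_right_cancel h2)
    have hbij : Function.Bijective e := Finite.injective_iff_bijective.mp hinj
    calc ∏ v : X, cj A (((v : G) * y) ^ k) a₀
        = ∏ v : X, cj A (((e v : G)) * y ^ k) a₀ := by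
          apply Finset.prod_congr rfl
          intro v _
          congr 1
          simp only [he, inv_mul_cancel_right]
      _ = ∏ v : X, cj A ((v : G) * y ^ k) a₀ := hbij.prod_comp (fun u : X => cj A ((u : G) * y ^ k) a₀)
  rw [Finset.prod_congr rfl hmid, hm0₁] at hP1
  rw [hm0₂, mul_one] at hP2
  rw [hP2, one_mul] at hP1
  -- conclude
  have hsdvd : s ∣ t := by
    have : orderOf a₀ = s := by rw [← ha₀, orderOf_coe]
    rw [← this]
    exact orderOf_dvd_of_pow_eq_one hP1
  rcases (Nat.Prime.eq_one_or_self_of_dvd hx s hsdvd) with h | h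
  · exact hs.ne_one h
  · exact hxs h.symm

end Unified

end Conj


section Ctx

omit [Finite G] in
/-- From solvability, extract a nontrivial commutative normal subgroup. -/
lemma exists_abelian_normal (hsol : IsSolvable G) (hnt : Nontrivial G) :
    ∃ A : Subgroup G, A.Normal ∧ IsMulCommutative A ∧ ∃ a₀ : G, a₀ ∈ A ∧ a₀ ≠ 1 := by
  classical
  obtain ⟨nn, hnn⟩ := (isSolvable_def G).mp hsol
  have hP : ∃ k, derivedSeries G k = ⊥ := ⟨nn, hnn⟩
  have hk : derivedSeries G (Nat.find hP) = ⊥ := Nat.find_spec hP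
  have hkpos : Nat.find hP ≠ 0 := by
    intro h
    rw [h] at hk
    exact absurd hk top_ne_bot
  have hj : derivedSeries G (Nat.find hP - 1) ≠ ⊥ := Nat.find_min hP (by omega)
  refine ⟨derivedSeries G (Nat.find hP - 1), derivedSeries_normal G _, ?_, ?_⟩
  · have hsucc : derivedSeries G (Nat.find hP - 1 + 1) = ⊥ := by
      have : Nat.find hP - 1 + 1 = Nat.find hP := by omega
      rw [this]; exact hk
    rw [derivedSeries_succ] at hsucc
    have hle := Subgroup.commutator_eq_bot_iff_le_centralizer.mp hsucc
    exact ⟨⟨fun a b => Subtype.ext (by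
      rw [Subgroup.coe_mul, Subgroup.coe_mul]
      exact Subgroup.mem_centralizer_iff.mp (hle b.2) ↑a a.2)⟩⟩
  · by_contra h
    push_neg at h
    exact hj (Subgroup.eq_bot_iff_forall _ |>.mpr fun a ha => h a ha)

/-- Two finite subgroups, one inside the other, with at least the same cardinality,
are equal. -/
lemma sub_eq_of_le_card {S T : Subgroup G} (h : S ≤ T) (hc : Nat.card T ≤ Nat.card S) :
    S = T := by
  have hST : (S : Set G) ⊆ (T : Set G) := h
  have hfin : (T : Set G).Finite := Set.toFinite _
  have hcard : (T : Set G).ncard ≤ (S : Set G).ncard := by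
    rwa [← Nat.card_coe_set_eq, ← Nat.card_coe_set_eq]
  exact SetLike.ext' (Set.eq_of_subset_of_ncard_le hST hcard hfin)

end Ctx


section Apps

omit [Finite G] in
lemma centralizer_normal (A : Subgroup G) [hA : A.Normal] :
    (Subgroup.centralizer (A : Set G)).Normal := by
  constructor
  intro c hc g
  rw [Subgroup.mem_centralizer_iff]
  intro h hh
  have hh' : g⁻¹ * h * g ∈ A := by
    have := hA.conj_mem h hh g⁻¹
    simpa using this
  have := Subgroup.mem_centralizer_iff.mp hc _ hh'
  have h2 := congrArg (fun z => g * z * g⁻¹) this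
  simp only [mul_assoc] at h2 ⊢
  simpa [mul_assoc, inv_mul_cancel_left, mul_inv_cancel_left] using h2

/-- No subgroup of order `u²` for a prime `u ≠ s`. -/
lemma no_sq (A : Subgroup G) [A.Normal] [IsMulCommutative A]
    (hprime : ∀ g : G, g ≠ 1 → (orderOf g).Prime)
    {s : ℕ} (hs : s.Prime) (horder : ∀ a : A, a ≠ 1 → orderOf (a : G) = s)
    (a₀ : A) (ha₀ : orderOf (a₀ : G) = s)
    {u : ℕ} (hu : u.Prime) (hus : u ≠ s) (hdvd : u ^ 2 ∣ Nat.card G) : False := by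
  classical
  haveI : Fact u.Prime := ⟨hu⟩
  have hN := Nrm_eq_one A hprime hs horder
  obtain ⟨E, hE⟩ := Sylow.exists_subgroup_card_pow_prime u (n := 2) hdvd
  have hEnt : Nontrivial ↥E := by
    rw [← Finite.one_lt_card_iff_nontrivial, hE]
    exact Nat.one_lt_pow (by omega) hu.one_lt
  have hEp : IsPGroup u ↥E := IsPGroup.of_card hE
  haveI := hEnt
  haveI : Nontrivial (Subgroup.center ↥E) := hEp.center_nontrivial
  obtain ⟨z, hz1⟩ := exists_ne (1 : Subgroup.center ↥E)
  -- the element x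
  set ζ : ↥E := (z : ↥E) with hζ
  have hζ1 : ζ ≠ 1 := by
    intro h
    exact hz1 (Subtype.ext h)
  set x : G := (ζ : G) with hxdef
  have hx1 : x ≠ 1 := by
    intro h
    exact hζ1 (Subtype.ext h)
  have horder_in_E : ∀ g : ↥E, (g : G) ≠ 1 → orderOf (g : G) = u := by
    intro g hg
    have h1 := hprime _ hg
    have h2 : orderOf (g : G) ∣ u ^ 2 := by
      rw [orderOf_coe, ← hE]
      exact orderOf_dvd_natCard g
    exact (Nat.prime_dvd_prime_iff_eq h1 hu).mp (h1.dvd_of_dvd_pow h2)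
  have hxu : orderOf x = u := horder_in_E ζ hx1
  -- the element y
  have hex_y : ∃ y, y ∈ E ∧ y ∉ zpowers x := by
    by_contra h
    push_neg at h
    have hle : E ≤ zpowers x := fun g hg => h g hg
    have := Subgroup.card_dvd_of_le hle
    rw [hE, Nat.card_zpowers, hxu] at this
    have := Nat.le_of_dvd hu.pos this
    nlinarith [hu.two_le]
  obtain ⟨y, hyE, hyX⟩ := hex_y
  have hy1 : y ≠ 1 := fun h => hyX (h ▸ one_mem _)
  have hyu : orderOf y = u := horder_in_E ⟨y, hyE⟩ hy1
  -- commutation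
  have hcomm : y * x = x * y := by
    have := Subgroup.mem_center_iff.mp z.2 ⟨y, hyE⟩
    have h2 := congrArg (Subtype.val) this
    simpa using h2
  have hnorm : y * x * y⁻¹ ∈ zpowers x := by
    rw [hcomm, mul_inv_cancel_right]
    exact mem_zpowers x
  have hw : ∀ v ∈ zpowers x, orderOf (v * y) = orderOf y := by
    rintro v ⟨k, rfl⟩
    have hcyx : Commute y x := hcomm
    have hcxy : Commute (x ^ k) y := hcyx.symm.zpow_left k
    have hvy1 : x ^ k * y ≠ 1 := by
      intro h
      have h2 : (x ^ k)⁻¹ = y := by rw [eq_inv_of_mul_eq_one_left h, inv_inv]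
      exact hyX (h2 ▸ inv_mem (zpow_mem (mem_zpowers x) k))
    have hxk1 : (x ^ k) ^ u = 1 := by
      have hxu1 : x ^ (u : ℤ) = 1 := by
        rw [zpow_natCast, ← hxu]
        exact pow_orderOf_eq_one x
      rw [← zpow_natCast (x ^ k) u, ← zpow_mul, mul_comm, zpow_mul, hxu1, one_zpow]
    have hpow : (x ^ k * y) ^ u = 1 := by
      rw [hcxy.mul_pow, hxk1, ← hyu, pow_orderOf_eq_one, one_mul]
    rw [hyu]
    exact orderOf_eq_prime hpow hvy1
  exact unified A hprime hs a₀ ha₀ hN (hxu ▸ hu) (hxu ▸ hus) hyX (hyu ▸ hu) hnorm hw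


/-- No subgroup of order `u·v` for distinct primes `u, v` both different from `s`. -/
lemma no_pq (A : Subgroup G) [A.Normal] [IsMulCommutative A]
    (hprime : ∀ g : G, g ≠ 1 → (orderOf g).Prime)
    {s : ℕ} (hs : s.Prime) (horder : ∀ a : A, a ≠ 1 → orderOf (a : G) = s)
    (a₀ : A) (ha₀ : orderOf (a₀ : G) = s)
    {K : Subgroup G} {u v : ℕ} (hu : u.Prime) (hv : v.Prime) (hvu : v < u)
    (hus : u ≠ s) (hvs : v ≠ s) (hK : Nat.card ↥K = u * v) : False := by
  classical
  haveI : Fact u.Prime := ⟨hu⟩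
  haveI : Fact v.Prime := ⟨hv⟩
  have hN := Nrm_eq_one A hprime hs horder
  obtain ⟨ξ, hξ⟩ := exists_prime_orderOf_dvd_card' (G := ↥K) u
    (by rw [hK]; exact dvd_mul_right u v)
  have hPcard : Nat.card (zpowers ξ) = u := by rw [Nat.card_zpowers, hξ]
  have hfact : (Nat.card ↥K).factorization u = 1 := by
    rw [hK, Nat.factorization_mul hu.pos.ne' hv.pos.ne']
    simp [hu.factorization, hv.factorization, Finsupp.single_apply, hvu.ne]
  set S : Sylow u ↥K := Sylow.ofCard (zpowers ξ) (by rw [hPcard, hfact, pow_one]) with hS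
  have hScoe : (S : Subgroup ↥K) = zpowers ξ := rfl
  have hSindex : (S : Subgroup ↥K).index = v := by
    have h1 := Subgroup.card_mul_index (S : Subgroup ↥K)
    rw [hScoe, hPcard, hK] at h1
    exact Nat.eq_of_mul_eq_mul_left hu.pos h1
  have hcount : Nat.card (Sylow u ↥K) = 1 := by
    have hdvd := Sylow.card_dvd_index S
    rw [hSindex] at hdvd
    rcases (Nat.Prime.eq_one_or_self_of_dvd hv _ hdvd) with h1 | hvv
    · exact h1
    · exfalso
      have hmod := card_sylow_modEq_one u ↥K
      rw [hvv] at hmod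
      have : v % u = 1 % u := hmod
      rw [Nat.mod_eq_of_lt hvu, Nat.mod_eq_of_lt hu.one_lt] at this
      exact hv.one_lt.ne' this
  have hnormal : ((S : Subgroup ↥K)).Normal := by
    apply Subgroup.normalizer_eq_top_iff.mp
    apply Subgroup.index_eq_one.mp
    exact (Sylow.card_eq_index_normalizer S).symm.trans hcount
  set x : G := (ξ : G) with hxdef
  have hxu : orderOf x = u := by rw [hxdef, orderOf_coe, hξ]
  obtain ⟨η, hη⟩ := exists_prime_orderOf_dvd_card' (G := ↥K) v
    (by rw [hK]; exact dvd_mul_left v u)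
  set y : G := (η : G) with hydef
  have hyv : orderOf y = v := by rw [hydef, orderOf_coe, hη]
  have hyX : y ∉ zpowers x := by
    intro hy
    have hd := orderOf_dvd_of_mem_zpowers hy
    rw [hyv, hxu] at hd
    exact hvu.ne ((Nat.prime_dvd_prime_iff_eq hv hu).mp hd)
  have hy1 : y ≠ 1 := fun h => hv.ne_one (by rw [← hyv, h, orderOf_one])
  have hnorm : y * x * y⁻¹ ∈ zpowers x := by
    have hmemS : ξ ∈ (S : Subgroup ↥K) := by rw [hScoe]; exact mem_zpowers ξ
    have h1 : η * ξ * η⁻¹ ∈ (S : Subgroup ↥K) := hnormal.conj_mem ξ hmemS η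
    rw [hScoe] at h1
    obtain ⟨k, hk⟩ := h1
    refine ⟨k, ?_⟩
    have := congrArg (Subtype.val) hk
    push_cast at this
    exact this
  have hw : ∀ v' ∈ zpowers x, orderOf (v' * y) = orderOf y := by
    intro v' hv'
    have hxK : x ∈ K := SetLike.coe_mem ξ
    have hv'K : v' ∈ K := (zpowers_le.mpr hxK) hv'
    have hvy1 : v' * y ≠ 1 := by
      intro h
      have h2 : v'⁻¹ = y := by rw [eq_inv_of_mul_eq_one_left h, inv_inv]
      exact hyX (h2 ▸ inv_mem hv')
    have hoP : orderOf (v' * y) ∣ u * v := by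
      have hmem : v' * y ∈ K := mul_mem hv'K (SetLike.coe_mem η)
      have h3 : orderOf (⟨v' * y, hmem⟩ : ↥K) ∣ Nat.card ↥K := orderOf_dvd_natCard _
      rwa [orderOf_mk, hK] at h3
    have hop := hprime _ hvy1
    have hcases : orderOf (v' * y) = u ∨ orderOf (v' * y) = v := by
      rcases (Nat.Prime.dvd_mul hop).mp hoP with h | h
      · exact Or.inl ((Nat.prime_dvd_prime_iff_eq hop hu).mp h)
      · exact Or.inr ((Nat.prime_dvd_prime_iff_eq hop hv).mp h)
    rcases hcases with hc | hc
    · exfalso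
      have hWm : (v' * y) ^ v * (y ^ v)⁻¹ ∈ zpowers x := U_mem hnorm v v' hv'
      have hyv1 : y ^ v = 1 := by rw [← hyv]; exact pow_orderOf_eq_one y
      rw [hyv1, inv_one, mul_one] at hWm
      have hco : Nat.Coprime v u := (Nat.coprime_primes hv hu).mpr hvu.ne
      obtain ⟨c, -, hc2⟩ := Nat.exists_mul_mod_eq_one_of_coprime hco hu.one_lt
      have hmemvy : v' * y ∈ zpowers x := by
        have h3 : v' * y = ((v' * y) ^ v) ^ c := by
          rw [← pow_mul]
          calc v' * y = (v' * y) ^ (v * c % u) := by rw [hc2, pow_one]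
            _ = (v' * y) ^ (v * c) := by rw [← hc]; exact pow_mod_orderOf _ _
        rw [h3]
        exact pow_mem hWm c
      have : y ∈ zpowers x := by
        have h4 := mul_mem (inv_mem hv') hmemvy
        rwa [inv_mul_cancel_left] at h4
      exact hyX this
    · rw [hyv]; exact hc
  exact unified A hprime hs a₀ ha₀ hN (hxu ▸ hu) (hxu ▸ hus) hyX (hyv ▸ hv) hnorm hw

end Apps


section CtxBuild

/-- Build the full abelian-normal-subgroup context. -/
lemma build_ctx (hsol : IsSolvable G) (hnt : Nontrivial G)
    (hprime : ∀ g : G, g ≠ 1 → (orderOf g).Prime) :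
    ∃ A : Subgroup G, A.Normal ∧ IsMulCommutative A ∧ ∃ s : ℕ, s.Prime ∧
      (∀ a : ↥A, a ≠ 1 → orderOf (a : G) = s) ∧ ∃ a₀ : ↥A, orderOf (a₀ : G) = s := by
  obtain ⟨A, hAn, hAc, g₀, hg₀A, hg₀1⟩ := exists_abelian_normal hsol hnt
  haveI := hAn; haveI := hAc
  refine ⟨A, hAn, hAc, orderOf g₀, hprime g₀ hg₀1, ?_, ⟨⟨g₀, hg₀A⟩, rfl⟩⟩
  intro a ha1
  have ha1' : (a : G) ≠ 1 := fun h => ha1 (Subtype.ext h)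
  have hcomm : Commute (a : G) g₀ :=
    Subgroup.mul_comm_of_mem_isMulCommutative A a.2 hg₀A
  exact order_eq_of_commute hprime (hprime g₀ hg₀1) rfl ha1' hcomm

/-- The centralizer of the abelian normal subgroup is an `s`-group. -/
lemma cent_pgroup (A : Subgroup G)
    (hprime : ∀ g : G, g ≠ 1 → (orderOf g).Prime)
    {s : ℕ} (hs : s.Prime) {a₀ : G} (ha₀A : a₀ ∈ A) (has : orderOf a₀ = s) :
    IsPGroup s (Subgroup.centralizer (A : Set G)) := by
  intro c
  by_cases hc : (c : G) = 1
  · exact ⟨0, by rw [pow_zero, pow_one]; exact Subtype.ext hc⟩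
  · have hcomm : Commute (c : G) a₀ :=
      (Subgroup.mem_centralizer_iff.mp c.2 a₀ ha₀A).symm
    have hco : orderOf (c : G) = s := order_eq_of_commute hprime hs has hc hcomm
    refine ⟨1, ?_⟩
    rw [pow_one]
    apply Subtype.ext
    rw [SubmonoidClass.coe_pow, OneMemClass.coe_one, ← hco]
    exact pow_orderOf_eq_one _

omit [Finite G] in
lemma quot_prime (C : Subgroup G) [C.Normal]
    (hprime : ∀ g : G, g ≠ 1 → (orderOf g).Prime) :
    ∀ q : G ⧸ C, q ≠ 1 → (orderOf q).Prime := by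
  intro q hq
  obtain ⟨g, rfl⟩ := QuotientGroup.mk_surjective q
  have hg1 : g ≠ 1 := by rintro rfl; exact hq rfl
  have hd : orderOf ((g : G ⧸ C)) ∣ orderOf g := orderOf_map_dvd (QuotientGroup.mk' C) g
  have hgp := hprime g hg1
  rcases hgp.eq_one_or_self_of_dvd _ hd with h | h
  · exact absurd (orderOf_eq_one_iff.mp h) hq
  · rw [h]; exact hgp

end CtxBuild


section Shape

/-- Order-shape theorem: a finite solvable group all of whose non-identity elements
have prime order has order `p^k` or `p^m·q`. -/
theorem shape : ∀ (n : ℕ) (H : Type*) [Group H] [Finite H],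
    IsSolvable H → (∀ g : H, g ≠ 1 → (orderOf g).Prime) → Nat.card H = n →
    (∃ p k, Nat.Prime p ∧ n = p ^ k) ∨
    (∃ p q m, Nat.Prime p ∧ Nat.Prime q ∧ p ≠ q ∧ 1 ≤ m ∧ n = p ^ m * q) := by
  intro n
  induction n using Nat.strong_induction_on with
  | _ n ih =>
  intro H _ _ hsol hprime hcard
  by_cases hpp : ∃ p k, Nat.Prime p ∧ n = p ^ k
  · exact Or.inl hpp
  have hn1 : n ≠ 1 := fun h => hpp ⟨2, 0, Nat.prime_two, by rw [h, pow_zero]⟩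
  have hn0 : n ≠ 0 := by
    have : 0 < Nat.card H := Nat.card_pos
    omega
  haveI hnt : Nontrivial H := by
    rw [← Finite.one_lt_card_iff_nontrivial, hcard]
    omega
  obtain ⟨A, hAn, hAc, s, hs, horder, a₀, ha₀⟩ := build_ctx hsol hnt hprime
  haveI := hAn; haveI := hAc
  haveI : Fact s.Prime := ⟨hs⟩
  set C : Subgroup H := Subgroup.centralizer (A : Set H) with hC
  haveI : C.Normal := centralizer_normal A
  have hCp : IsPGroup s ↥C := cent_pgroup A hprime hs a₀.2 ha₀
  obtain ⟨e, he⟩ := (IsPGroup.iff_card).mp hCp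
  have ha₀C : (a₀ : H) ∈ C := by
    rw [hC, Subgroup.mem_centralizer_iff]
    intro h hh
    exact Subgroup.mul_comm_of_mem_isMulCommutative A hh a₀.2
  have ha₀1 : (a₀ : H) ≠ 1 := by
    intro h
    rw [h, orderOf_one] at ha₀
    exact hs.ne_one ha₀.symm
  have hC1 : 1 < Nat.card C := by
    rw [Finite.one_lt_card_iff_nontrivial]
    exact ⟨⟨⟨a₀, ha₀C⟩, 1, fun h => ha₀1 (congrArg Subtype.val h)⟩⟩
  have he1 : 1 ≤ e := by
    by_contra h
    push_neg at h
    interval_cases e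
    rw [pow_zero] at he
    omega
  have hcardQ : Nat.card H = Nat.card (H ⧸ C) * Nat.card C :=
    Subgroup.card_eq_card_quotient_mul_card_subgroup C
  have hQpos : 0 < Nat.card (H ⧸ C) := Nat.card_pos
  have hQlt : Nat.card (H ⧸ C) < n := by
    rw [← hcard, hcardQ]
    nlinarith
  have hres := ih (Nat.card (H ⧸ C)) hQlt (H ⧸ C) (haveI : Group.IsSolvable H := hsol; (inferInstance : Group.IsSolvable (H ⧸ C)))
    (quot_prime C hprime) rfl
  have hneq : n = Nat.card (H ⧸ C) * s ^ e := by
    rw [← hcard, hcardQ, he]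
  rcases hres with ⟨p, k, hp, hpk⟩ | ⟨p, q, m, hp, hq, hpq, hm, hqeq⟩
  · -- quotient is a prime power p^k
    by_cases hps : p = s
    · subst hps
      exact absurd ⟨p, k + e, hp, by rw [hneq, hpk, pow_add]⟩ hpp
    · match k, hpk with
      | 0, hpk =>
        exact absurd ⟨s, e, hs, by rw [hneq, hpk, pow_zero, one_mul]⟩ hpp
      | 1, hpk =>
        exact Or.inr ⟨s, p, e, hs, hp, fun h => hps h.symm, he1,
          by rw [hneq, hpk, pow_one, mul_comm]⟩
      | (k + 2), hpk =>
        exfalso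
        refine no_sq A hprime hs horder a₀ ha₀ hp hps ?_
        rw [hcard, hneq, hpk]
        exact Dvd.dvd.mul_right (pow_dvd_pow p (by omega)) _
  · -- quotient has shape p^m * q
    by_cases hps : p = s
    · subst hps
      exact Or.inr ⟨p, q, m + e, hp, hq, hpq, by omega,
        by rw [hneq, hqeq, pow_add]; ring⟩
    · have hm1 : m = 1 := by
        by_contra hm2
        have hm2' : 2 ≤ m := by omega
        refine no_sq A hprime hs horder a₀ ha₀ hp hps ?_
        rw [hcard, hneq, hqeq]
        exact Dvd.dvd.mul_right (Dvd.dvd.mul_right (pow_dvd_pow p (by omega)) _) _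
      subst hm1
      rw [pow_one] at hqeq
      by_cases hqs : q = s
      · subst hqs
        exact Or.inr ⟨q, p, e + 1, hs, hp, fun h => hps h.symm, by omega,
          by rw [hneq, hqeq, pow_succ]; ring⟩
      · -- three distinct primes: contradiction
        exfalso
        have hcop : Nat.Coprime (Nat.card C) C.index := by
          rw [he, Subgroup.index_eq_card, hqeq]
          apply Nat.Coprime.pow_left
          apply Nat.Coprime.mul_right
          · exact (Nat.coprime_primes hs hp).mpr fun h => hps h.symm
          · exact (Nat.coprime_primes hs hq).mpr fun h => hqs h.symm
        obtain ⟨K, hK⟩ := Subgroup.exists_right_complement'_of_coprime hcop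
        have hKcard : Nat.card ↥K = p * q := by
          have h1 := hK.card_mul
          rw [he, hcard, hneq, hqeq] at h1
          have hse : s ^ e ≠ 0 := pow_ne_zero e hs.pos.ne'
          calc Nat.card ↥K = s ^ e * Nat.card ↥K / s ^ e := by
                rw [Nat.mul_div_cancel_left _ (Nat.pos_of_ne_zero hse)]
            _ = p * q * s ^ e / s ^ e := by rw [h1]
            _ = p * q := Nat.mul_div_cancel _ (Nat.pos_of_ne_zero hse)
        rcases lt_trichotomy p q with hlt | heq2 | hgt
        · exact no_pq A hprime hs horder a₀ ha₀ hq hp hlt hqs hps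
            (by rw [hKcard, mul_comm])
        · exact hpq heq2
        · exact no_pq A hprime hs horder a₀ ha₀ hp hq hgt hps hqs hKcard

end Shape


section Final

/-- The self-normalizing prime-order subgroup. -/
lemma self_normalizing (A : Subgroup G) [A.Normal] [IsMulCommutative A]
    (hprime : ∀ g : G, g ≠ 1 → (orderOf g).Prime)
    {s : ℕ} (hs : s.Prime) (horder : ∀ a : A, a ≠ 1 → orderOf (a : G) = s)
    (a₀ : A) (ha₀ : orderOf (a₀ : G) = s)
    {r : ℕ} (hr : r.Prime) (hrs : r ≠ s) {x : G} (hx : orderOf x = r) :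
    normalizer (zpowers x : Set G) = zpowers x := by
  have hN := Nrm_eq_one A hprime hs horder
  refine le_antisymm ?_ le_normalizer
  by_contra hcon
  obtain ⟨y, hyN, hyX⟩ := SetLike.not_le_iff_exists.mp hcon
  have hy1 : y ≠ 1 := fun h => hyX (h ▸ one_mem _)
  have hyp := hprime y hy1
  have hnorm_all : ∀ h ∈ zpowers x, y * h * y⁻¹ ∈ zpowers x := by
    intro h hh
    exact (Subgroup.mem_normalizer_iff.mp hyN h).mp hh
  have hnorm : y * x * y⁻¹ ∈ zpowers x := hnorm_all x (mem_zpowers x)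
  have hXr : ∀ h ∈ zpowers x, h ^ r = 1 := by
    rintro h ⟨k, rfl⟩
    have hxr : x ^ (r : ℤ) = 1 := by rw [zpow_natCast, ← hx]; exact pow_orderOf_eq_one x
    rw [← zpow_natCast (x ^ k) r, ← zpow_mul, mul_comm, zpow_mul, hxr, one_zpow]
  have hw : ∀ v ∈ zpowers x, orderOf (v * y) = orderOf y := by
    intro v hv
    have hvy1 : v * y ≠ 1 := by
      intro h
      have h2 : v⁻¹ = y := by rw [eq_inv_of_mul_eq_one_left h, inv_inv]
      exact hyX (h2 ▸ inv_mem hv)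
    have hyw : y ^ orderOf y = 1 := pow_orderOf_eq_one y
    have hWm : (v * y) ^ orderOf y ∈ zpowers x := by
      have h3 := U_mem hnorm (orderOf y) v hv
      rwa [hyw, inv_one, mul_one] at h3
    have hdvd : orderOf (v * y) ∣ orderOf y * r := by
      apply orderOf_dvd_of_pow_eq_one
      rw [pow_mul]
      exact hXr _ hWm
    have hop := hprime _ hvy1
    rcases (Nat.Prime.dvd_mul hop).mp hdvd with h | h
    · exact (Nat.prime_dvd_prime_iff_eq hop hyp).mp h
    · have hor : orderOf (v * y) = r := (Nat.prime_dvd_prime_iff_eq hop hr).mp h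
      by_cases hwr : orderOf y = r
      · rw [hor, hwr]
      · exfalso
        have hco : Nat.Coprime (orderOf y) r := (Nat.coprime_primes hyp hr).mpr hwr
        obtain ⟨c, -, hc2⟩ := Nat.exists_mul_mod_eq_one_of_coprime hco hr.one_lt
        have hmem : v * y ∈ zpowers x := by
          have h3 : v * y = ((v * y) ^ orderOf y) ^ c := by
            rw [← pow_mul]
            calc v * y = (v * y) ^ (orderOf y * c % r) := by rw [hc2, pow_one]
              _ = (v * y) ^ (orderOf y * c) := by rw [← hor]; exact pow_mod_orderOf _ _
          rw [h3]
          exact pow_mem hWm c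
        have h5 : y ∈ zpowers x := by
          have h4 := mul_mem (inv_mem hv) hmem
          rwa [inv_mul_cancel_left] at h4
        exact hyX h5
  exact unified A hprime hs a₀ ha₀ hN (hx ▸ hr) (hx ▸ hrs) hyX hyp hnorm hw

end Final

end FrobAux

/-- A finite solvable group all of whose non-identity elements have prime order,
and which is not a `p`-group of exponent `p` for any prime `p`, is a Frobenius
group of order `p^a·q` for distinct primes `p`, `q`. Here a Frobenius group is
witnessed by a proper nontrivial subgroup `H` with `H ∩ H^g = 1` for all
`g ∉ H`. -/
theorem frobenius_of_elements_of_prime_order {G : Type*} [Group G] [Fintype G]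
    [Nontrivial G] (hsol : IsSolvable G)
    (hprime : ∀ g : G, g ≠ 1 → (orderOf g).Prime)
    (hnp : ¬ ∃ p : ℕ, p.Prime ∧ IsPGroup p G ∧ Monoid.exponent G = p) :
    ∃ H : Subgroup G, H ≠ ⊥ ∧ H ≠ ⊤ ∧
      (∀ g : G, g ∉ H → H ⊓ H.map (MulAut.conj g).toMonoidHom = ⊥) ∧
      ∃ p q : ℕ, p.Prime ∧ q.Prime ∧ p ≠ q ∧
        ∃ a : ℕ, Fintype.card G = p ^ a * q := by
  classical
  open FrobAux Subgroup in
  have hcard : Fintype.card G = Nat.card G := (Nat.card_eq_fintype_card).symm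
  have hnpp : ¬ ∃ p k, Nat.Prime p ∧ Nat.card G = p ^ k := by
    rintro ⟨p, k, hp, hpk⟩
    apply hnp
    refine ⟨p, hp, IsPGroup.of_card hpk, ?_⟩
    have hallp : ∀ g : G, g ^ p = 1 := by
      intro g
      by_cases hg : g = 1
      · rw [hg, one_pow]
      · have h1 := hprime g hg
        have h2 : orderOf g ∣ p ^ k := hpk ▸ orderOf_dvd_natCard g
        have h3 : orderOf g = p := (Nat.prime_dvd_prime_iff_eq h1 hp).mp (h1.dvd_of_dvd_pow h2)
        rw [← h3]
        exact pow_orderOf_eq_one g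
    have hdvd : Monoid.exponent G ∣ p := Monoid.exponent_dvd_of_forall_pow_eq_one hallp
    rcases (Nat.Prime.eq_one_or_self_of_dvd hp _ hdvd) with h | h
    · exfalso
      obtain ⟨g, hg⟩ := exists_ne (1 : G)
      have hgp : orderOf g ∣ Monoid.exponent G := Monoid.order_dvd_exponent g
      rw [h, Nat.dvd_one, orderOf_eq_one_iff] at hgp
      exact hg hgp
    · exact h
  obtain hsh | ⟨p, q, m, hp, hq, hpq, hm, hn⟩ :=
    FrobAux.shape (Nat.card G) G hsol hprime rfl
  · exact absurd hsh hnpp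
  obtain ⟨A, hAn, hAc, s, hs, horder, a₀, ha₀⟩ :=
    FrobAux.build_ctx hsol inferInstance hprime
  haveI := hAn; haveI := hAc
  have hsdvd : s ∣ Nat.card G := by
    rw [← ha₀]
    exact orderOf_dvd_natCard _
  have hs_cases : s = p ∨ s = q := by
    rw [hn] at hsdvd
    rcases (Nat.Prime.dvd_mul hs).mp hsdvd with h | h
    · exact Or.inl ((Nat.prime_dvd_prime_iff_eq hs hp).mp (hs.dvd_of_dvd_pow h))
    · exact Or.inr ((Nat.prime_dvd_prime_iff_eq hs hq).mp h)
  obtain ⟨r, hr, hrs, hrdvd⟩ : ∃ r, Nat.Prime r ∧ r ≠ s ∧ r ∣ Nat.card G := by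
    rcases hs_cases with h | h
    · refine ⟨q, hq, fun hh => hpq ((hh.trans h).symm), by rw [hn]; exact Dvd.dvd.mul_left dvd_rfl _⟩
    · refine ⟨p, hp, fun hh => hpq (hh.trans h),
        by rw [hn]; exact Dvd.dvd.mul_right (dvd_pow_self p (by omega)) _⟩
  haveI : Fact r.Prime := ⟨hr⟩
  obtain ⟨x, hx⟩ := exists_prime_orderOf_dvd_card' (G := G) r hrdvd
  have hXnorm := FrobAux.self_normalizing A hprime hs horder a₀ ha₀ hr hrs hx
  refine ⟨zpowers x, ?_, ?_, ?_, p, q, hp, hq, hpq, m, by rw [hcard, hn]⟩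
  · rw [Ne, zpowers_eq_bot]
    intro h
    rw [h, orderOf_one] at hx
    exact hr.ne_one hx.symm
  · intro h
    have h1 : Nat.card (zpowers x) = Nat.card G := by rw [h, Subgroup.card_top]
    rw [Nat.card_zpowers, hx, hn] at h1
    have hpd : p ∣ r := h1 ▸ Dvd.dvd.mul_right (dvd_pow_self p (by omega)) q
    have hqd : q ∣ r := h1 ▸ Dvd.dvd.mul_left dvd_rfl (p ^ m)
    have hpr : p = r := (Nat.prime_dvd_prime_iff_eq hp hr).mp hpd
    have hqr : q = r := (Nat.prime_dvd_prime_iff_eq hq hr).mp hqd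
    exact hpq (hpr.trans hqr.symm)
  · intro g hg
    by_contra hbot
    rcases Subgroup.bot_or_exists_ne_one (zpowers x ⊓ (zpowers x).map (MulAut.conj g).toMonoidHom)
      with h | ⟨z, hzmem, hz1⟩
    · exact hbot h
    have hzH : z ∈ zpowers x := (Subgroup.mem_inf.mp hzmem).1
    have hzHg : z ∈ (zpowers x).map (MulAut.conj g).toMonoidHom := (Subgroup.mem_inf.mp hzmem).2
    have hconj_eq : (MulAut.conj g).toMonoidHom x = g * x * g⁻¹ := by
      simp [MulAut.conj_apply]
    have hmap : (zpowers x).map (MulAut.conj g).toMonoidHom = zpowers (g * x * g⁻¹) := by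
      rw [MonoidHom.map_zpowers, hconj_eq]
    have hordz : orderOf z = r := by
      have hd := orderOf_dvd_of_mem_zpowers hzH
      rw [hx] at hd
      rcases (Nat.Prime.eq_one_or_self_of_dvd hr _ hd) with h | h
      · exact absurd (orderOf_eq_one_iff.mp h) hz1
      · exact h
    have hordconj : orderOf (g * x * g⁻¹) = r := by
      rw [← hconj_eq,
        orderOf_injective (MulAut.conj g).toMonoidHom (MulAut.conj g).injective x, hx]
    have h1 : zpowers z = zpowers x :=
      FrobAux.sub_eq_of_le_card (zpowers_le.mpr hzH)
        (by rw [Nat.card_zpowers, Nat.card_zpowers, hordz, hx])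
    have h2 : zpowers z = zpowers (g * x * g⁻¹) :=
      FrobAux.sub_eq_of_le_card (zpowers_le.mpr (hmap ▸ hzHg))
        (by rw [Nat.card_zpowers, Nat.card_zpowers, hordz, hordconj])
    have hHg : (zpowers x).map (MulAut.conj g).toMonoidHom = zpowers x := by
      rw [hmap, ← h2, h1]
    have hgN : g ∈ normalizer (zpowers x : Set G) := by
      rw [Subgroup.mem_normalizer_iff]
      intro h
      constructor
      · intro hh
        have hmem2 : g * h * g⁻¹ ∈ (zpowers x).map (MulAut.conj g).toMonoidHom :=
          ⟨h, hh, by simp [MulAut.conj_apply]⟩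
        rwa [hHg] at hmem2
      · intro hh
        rw [← hHg] at hh
        obtain ⟨h', hh', heq⟩ := hh
        have heq2 : h' = h := by
          simp only [MulEquiv.coe_toMonoidHom, MulAut.conj_apply] at heq
          exact mul_left_cancel (mul_right_cancel heq)
        rwa [← heq2]
    rw [hXnorm] at hgN
    exact hg hgN
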